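/- Let a : ℤ → ℝ be a sequence with a(n) ≠ 0 for all n ∈ ℤ satisfying the Somos-4 recurrence a(n)·a(n+4) = a(n+1)·a(n+3) + a(n+2)^2. Define S_n = S(a(n), a(n+1), a(n+2), a(n+3)). If S_0 = 0, then S_n = 0 for all n ∈ ℤ (both for positive and negative n). -/

import Mathlib

/-- The quartic polynomial `S`. -/
def somosS (a0 a1 a2 a3 : ℝ) : ℝ :=
  a0 ^ 2 * a3 ^ 2 + a1 ^ 2 * a2 ^ 2 + a0 * a2 ^ 3 + a3 * a1 ^ 3 + 2 * a0 * a1 * a2 * a3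

lemma somos_key (x0 x1 x2 x3 x4 : ℝ) (h0 : x0 ≠ 0)
    (h : x0 * x4 = x1 * x3 + x2 ^ 2) :
    x0 ^ 2 * somosS x1 x2 x3 x4 = x0 * x4 * somosS x0 x1 x2 x3 := by
  have hx4 : x4 = (x1 * x3 + x2 ^ 2) / x0 := by field_simp; linarith
  subst hx4
  unfold somosS
  field_simp
  ring

theorem stmt_2 (a : ℤ → ℝ) (hne : ∀ n : ℤ, a n ≠ 0)
    (hrec : ∀ n : ℤ, a n * a (n + 4) = a (n + 1) * a (n + 3) + a (n + 2) ^ 2)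
    (hS0 : somosS (a 0) (a 1) (a 2) (a 3) = 0) :
    ∀ n : ℤ, somosS (a n) (a (n + 1)) (a (n + 2)) (a (n + 3)) = 0 := by
  have step : ∀ n : ℤ, somosS (a n) (a (n + 1)) (a (n + 2)) (a (n + 3)) = 0 ↔
      somosS (a (n + 1)) (a (n + 2)) (a (n + 3)) (a (n + 4)) = 0 := by
    intro n
    have key := somos_key (a n) (a (n + 1)) (a (n + 2)) (a (n + 3)) (a (n + 4))
      (hne n) (hrec n)
    constructor
    · intro h
      have h2 : a n ^ 2 * somosS (a (n + 1)) (a (n + 2)) (a (n + 3)) (a (n + 4)) = 0 := by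
        rw [key, h]; ring
      have := pow_ne_zero 2 (hne n)
      exact (mul_eq_zero.mp h2).resolve_left this
    · intro h
      have h2 : a n * a (n + 4) * somosS (a n) (a (n + 1)) (a (n + 2)) (a (n + 3)) = 0 := by
        rw [← key, h]; ring
      have : a n * a (n + 4) ≠ 0 := mul_ne_zero (hne n) (hne _)
      exact (mul_eq_zero.mp h2).resolve_left this
  intro n
  induction n using Int.induction_on with
  | zero => exact hS0
  | succ k ih =>
    have := (step k).mp ih
    convert this using 3 <;> ring
  | pred k ih =>
    have := (step (-k - 1)).mpr (by convert ih using 3 <;> ring)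
    convert this using 3 <;> ring
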